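/- Let μ = (μ₁,...,μ_r) be a system of real measures with all moments finite, n a normal multi-index with type II polynomial P_n, and z₀ ∈ ℂ \ ℝ with P_n(z₀) = 0. Then n is not normal for the system (|x−z₀|²μ₁,...,|x−z₀|²μ_r), where |x−z₀|²μ_j is the positive-weight transform d(|x−z₀|²μ_j)(x) = (x−z₀)(x−z̄₀) dμ_j(x). -/

import Mathlib

open Polynomial MeasureTheory

private lemma integrable_poly (ν : Measure ℝ) (h : ∀ k : ℕ, Integrable (fun x : ℝ => x ^ k) ν)
    (p : Polynomial ℝ) : Integrable (fun x => p.eval x) ν := by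
  induction p using Polynomial.induction_on' with
  | add p q hp hq => simp only [Polynomial.eval_add]; exact hp.add hq
  | monomial i a => simpa [Polynomial.eval_monomial] using (h i).const_mul a

def IsTypeII {r : ℕ} (μ : Fin r → Measure ℝ) (w : Fin r → ℝ → ℝ) (n : Fin r → ℕ)
    (P : Polynomial ℝ) : Prop :=
  P.Monic ∧ P.natDegree = ∑ j, n j ∧
    ∀ j, ∀ k < n j, ∫ x : ℝ, P.eval x * x ^ k * w j x ∂(μ j) = 0

def NormalII {r : ℕ} (μ : Fin r → Measure ℝ) (w : Fin r → ℝ → ℝ) (n : Fin r → ℕ) : Prop :=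
  ∃! P : Polynomial ℝ, IsTypeII μ w n P

/-- If `n` is normal for the real system `μ` with type II polynomial `P` and `z₀ ∈ ℂ \ ℝ`
is a zero of `P`, then `n` is not normal for the transformed system
`(|x-z₀|²μ₁, ..., |x-z₀|²μ_r)`, where `|x-z₀|² = (x - Re z₀)² + (Im z₀)²`. -/
theorem stmt7 (r : ℕ) (μ : Fin r → Measure ℝ)
    (hmom : ∀ j, ∀ k : ℕ, Integrable (fun x : ℝ => x ^ k) (μ j))
    (n : Fin r → ℕ) (P : Polynomial ℝ)
    (hnorm : NormalII μ (fun _ _ => 1) n) (hP : IsTypeII μ (fun _ _ => 1) n P)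
    (z₀ : ℂ) (hz₀ : z₀.im ≠ 0) (hroot : Polynomial.aeval z₀ P = 0) :
    ¬ NormalII μ (fun _ x => (x - z₀.re) ^ 2 + z₀.im ^ 2) n := by
  obtain ⟨hmon, hdeg, horth⟩ := hP
  set q : Polynomial ℝ := X ^ 2 - C (2 * z₀.re) * X + C (z₀.re ^ 2 + z₀.im ^ 2) with hq
  have hqmonic : q.Monic := by
    rw [hq]; monicity!
  -- the quadratic factors over ℂ
  have hconj : z₀ ≠ (starRingEnd ℂ) z₀ := fun h => hz₀ (Complex.conj_eq_iff_im.mp h.symm)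
  have hroot2 : (Polynomial.aeval ((starRingEnd ℂ) z₀)) P = 0 := by
    have h := Polynomial.aeval_algHom_apply Complex.conjAe z₀ P
    simp only [Complex.conjAe_coe] at h
    rw [h, hroot, map_zero]
  have key : q.map (algebraMap ℝ ℂ) = (X - C z₀) * (X - C ((starRingEnd ℂ) z₀)) := by
    have h1 : (algebraMap ℝ ℂ) (2 * z₀.re) = z₀ + (starRingEnd ℂ) z₀ := by
      rw [Complex.add_conj]; simp
    have h2 : (algebraMap ℝ ℂ) (z₀.re ^ 2 + z₀.im ^ 2) = z₀ * (starRingEnd ℂ) z₀ := by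
      rw [Complex.mul_conj, Complex.normSq_apply, Complex.coe_algebraMap]
      push_cast; ring
    rw [hq]
    simp only [Polynomial.map_add, Polynomial.map_sub, Polynomial.map_mul, Polynomial.map_pow,
      Polynomial.map_X, Polynomial.map_C]
    rw [h1, h2, Polynomial.C_add, Polynomial.C_mul]
    ring
  have hmapdvd : q.map (algebraMap ℝ ℂ) ∣ P.map (algebraMap ℝ ℂ) := by
    rw [key]
    have hd1 : (X - C z₀) ∣ P.map (algebraMap ℝ ℂ) := by
      rw [Polynomial.dvd_iff_isRoot, Polynomial.IsRoot, Polynomial.eval_map,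
        ← Polynomial.aeval_def]
      exact hroot
    have hd2 : (X - C ((starRingEnd ℂ) z₀)) ∣ P.map (algebraMap ℝ ℂ) := by
      rw [Polynomial.dvd_iff_isRoot, Polynomial.IsRoot, Polynomial.eval_map,
        ← Polynomial.aeval_def]
      exact hroot2
    exact (Polynomial.isCoprime_X_sub_C_of_isUnit_sub (by
      simpa using sub_ne_zero.mpr hconj)).mul_dvd hd1 hd2
  have hdvd : q ∣ P :=
    (Polynomial.map_dvd_map (algebraMap ℝ ℂ)
      (algebraMap ℝ ℂ).injective hqmonic).mp hmapdvd
  obtain ⟨Q, hQ⟩ := hdvd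
  have hQmon : Q.Monic := hqmonic.of_mul_monic_left (hQ ▸ hmon)
  have hq2 : q.natDegree = 2 := by
    rw [hq]; compute_degree!
  have hsum : ∑ j, n j = 2 + Q.natDegree := by
    rw [← hdeg, hQ, Polynomial.natDegree_mul hqmonic.ne_zero hQmon.ne_zero, hq2]
  have hqeval : ∀ x : ℝ, q.eval x = (x - z₀.re) ^ 2 + z₀.im ^ 2 := by
    intro x; rw [hq]; simp; ring
  have hPeval : ∀ x : ℝ, P.eval x = Q.eval x * ((x - z₀.re) ^ 2 + z₀.im ^ 2) := by
    intro x; rw [hQ, Polynomial.eval_mul, hqeval]; ring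
  rintro ⟨P', hP', huniq⟩
  have hP'deg : P'.natDegree = ∑ j, n j := hP'.2.1
  have hQlt : Q.degree < P'.degree := by
    apply Polynomial.degree_lt_degree
    rw [hP'deg]; omega
  have hP'' : IsTypeII μ (fun _ x => (x - z₀.re) ^ 2 + z₀.im ^ 2) n (P' + Q) := by
    refine ⟨hP'.1.add_of_left hQlt, ?_, ?_⟩
    · rw [Polynomial.natDegree_eq_of_degree_eq (Polynomial.degree_add_eq_left_of_degree_lt hQlt),
        hP'deg]
    · intro j k hk
      have hint : ∀ p : Polynomial ℝ,
          Integrable (fun x : ℝ => p.eval x * x ^ k * ((x - z₀.re) ^ 2 + z₀.im ^ 2)) (μ j) := by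
        intro p
        have := integrable_poly (μ j) (hmom j) (p * X ^ k * q)
        simpa only [Polynomial.eval_mul, Polynomial.eval_pow, Polynomial.eval_X, hqeval]
          using this
      have hQorth : ∫ x : ℝ, Q.eval x * x ^ k * ((x - z₀.re) ^ 2 + z₀.im ^ 2) ∂(μ j) = 0 := by
        have e : ∀ x : ℝ, Q.eval x * x ^ k * ((x - z₀.re) ^ 2 + z₀.im ^ 2)
            = P.eval x * x ^ k * 1 := by
          intro x; rw [hPeval x]; ring
        simp only [e]
        exact horth j k hk
      simp only [Polynomial.eval_add, add_mul]
      rw [integral_add (hint P') (hint Q), hP'.2.2 j k hk, hQorth, add_zero]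
  have := huniq (P' + Q) hP''
  have hQ0 : Q = 0 := by
    have h := left_eq_add.mp this.symm
    exact h
  exact hQmon.ne_zero hQ0
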